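/- Let φ be regularly varying of index −1 (so φ^β is regularly varying of index −β). For every α > β, lim_{n→∞} (∑_{k=1}^n 2^{kα} φ(2^k)^β) / (2^{nα} φ(2^n)^β) = 2^{α−β}/(2^{α−β}−1). -/

import Mathlib

open Filter Set Finset

/-- If the ratios `a (n+1) / a n` of a positive sequence tend to `r > 1`, then
`(∑_{k=1}^n a k) / a n → r / (r - 1)`. -/
lemma aux_ratio_sum (a : ℕ → ℝ) (ha : ∀ n, 0 < a n) (r : ℝ) (hr : 1 < r)
    (hlim : Tendsto (fun n => a (n + 1) / a n) atTop (nhds r)) :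
    Tendsto (fun n => (∑ k ∈ Finset.Icc 1 n, a k) / a n) atTop (nhds (r / (r - 1))) := by
  have hr0 : (0 : ℝ) < r := lt_trans one_pos hr
  set q : ℝ := (1 + r) / 2 with hq_def
  have hq1 : 1 < q := by rw [hq_def]; linarith
  have hqr : q < r := by rw [hq_def]; linarith
  have hq0 : (0 : ℝ) < q := lt_trans one_pos hq1
  -- get N such that ratios are ≥ q from index N on
  obtain ⟨N0, hN0⟩ := eventually_atTop.mp (hlim.eventually (eventually_gt_nhds hqr))
  set N : ℕ := max N0 1 with hN_def
  have hN1 : 1 ≤ N := le_max_right _ _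
  have hstep : ∀ n, N ≤ n → q * a n ≤ a (n + 1) := by
    intro n hn
    have h := hN0 n (le_trans (le_max_left _ _) hn)
    have := (lt_div_iff₀ (ha n)).mp h
    linarith
  have hgeom : ∀ m, N ≤ m → ∀ i, a m * q ^ i ≤ a (m + i) := by
    intro m hm i
    induction i with
    | zero => simp
    | succ i ih =>
      have h1 : q * a (m + i) ≤ a (m + i + 1) := hstep (m + i) (le_trans hm (Nat.le_add_right _ _))
      calc a m * q ^ (i + 1) = q * (a m * q ^ i) := by ring
        _ ≤ q * a (m + i) := by
            exact mul_le_mul_of_nonneg_left ih hq0.le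
        _ ≤ a (m + i + 1) := h1
  -- bound for the first few terms
  have hne : (Finset.Icc 1 N).Nonempty := ⟨1, by simp [hN1]⟩
  set M : ℝ := (Finset.Icc 1 N).sup' hne a with hM_def
  have hM : ∀ m, 1 ≤ m → m ≤ N → a m ≤ M := by
    intro m h1 h2
    exact Finset.le_sup' a (Finset.mem_Icc.mpr ⟨h1, h2⟩)
  have hM0 : 0 < M := lt_of_lt_of_le (ha 1) (hM 1 le_rfl hN1)
  set C : ℝ := max 1 (M * q ^ N / a N) with hC_def
  have hC1 : (1 : ℝ) ≤ C := le_max_left _ _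
  have hC0 : (0 : ℝ) < C := lt_of_lt_of_le one_pos hC1
  set bound : ℕ → ℝ := fun j => C * q⁻¹ ^ j with hbound_def
  have h_sum : Summable bound :=
    (summable_geometric_of_lt_one (by positivity) (inv_lt_one_of_one_lt₀ hq1)).mul_left C
  set f : ℕ → ℕ → ℝ := fun n j => if j < n then a (n - j) / a n else 0 with hf_def
  -- the domination bound
  have h_bound : ∀ᶠ n in atTop, ∀ j, ‖f n j‖ ≤ bound j := by
    filter_upwards [eventually_ge_atTop N] with n hn j
    by_cases hj : j < n
    · have hfval : f n j = a (n - j) / a n := if_pos hj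
      rw [hfval, Real.norm_of_nonneg (le_of_lt (div_pos (ha _) (ha _)))]
      by_cases hNj : N ≤ n - j
      · -- geometric decay directly
        have h1 : a (n - j) * q ^ j ≤ a n := by
          have h2 := hgeom (n - j) hNj j
          rwa [Nat.sub_add_cancel hj.le] at h2
        have h3 : a (n - j) / a n ≤ q⁻¹ ^ j := by
          rw [inv_pow, div_le_iff₀ (ha n), inv_mul_eq_div, le_div_iff₀ (pow_pos hq0 j)]
          exact h1
        calc a (n - j) / a n ≤ q⁻¹ ^ j := h3
          _ ≤ C * q⁻¹ ^ j := le_mul_of_one_le_left (by positivity) hC1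
      · -- small index case
        push_neg at hNj
        have h1m : 1 ≤ n - j := Nat.le_sub_of_add_le (by omega)
        have hMa : a (n - j) ≤ M := hM _ h1m hNj.le
        -- a n ≥ a N * q ^ n / q ^ N ≥ a N * q ^ j / q ^ N
        have h2 : a N * q ^ (n - N) ≤ a n := by
          have := hgeom N le_rfl (n - N)
          rwa [Nat.add_sub_cancel' hn] at this
        have h3 : q ^ j ≤ q ^ (n - N) * q ^ N := by
          rw [← pow_add]
          exact pow_le_pow_right₀ hq1.le (by omega)
        have h4 : a N * q ^ j / q ^ N ≤ a n := by
          have h5 : a N * q ^ j / q ^ N ≤ a N * q ^ (n - N) := by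
            rw [div_le_iff₀ (pow_pos hq0 N)]
            calc a N * q ^ j ≤ a N * (q ^ (n - N) * q ^ N) :=
                  mul_le_mul_of_nonneg_left h3 (ha N).le
              _ = a N * q ^ (n - N) * q ^ N := by ring
          linarith
        have h6 : a (n - j) / a n ≤ M / (a N * q ^ j / q ^ N) :=
          div_le_div₀ hM0.le hMa (div_pos (mul_pos (ha N) (pow_pos hq0 j)) (pow_pos hq0 N)) h4
        have h7 : M / (a N * q ^ j / q ^ N) = (M * q ^ N / a N) * q⁻¹ ^ j := by
          have haN : a N ≠ 0 := (ha N).ne'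
          have hq' : q ≠ 0 := hq0.ne'
          field_simp
          rw [one_div, inv_pow, mul_inv_cancel₀ (pow_ne_zero _ hq')]
        calc a (n - j) / a n ≤ M / (a N * q ^ j / q ^ N) := h6
          _ = (M * q ^ N / a N) * q⁻¹ ^ j := h7
          _ ≤ C * q⁻¹ ^ j :=
              mul_le_mul_of_nonneg_right (le_max_right _ _) (by positivity)
    · rw [hf_def]
      simp only [if_neg hj, norm_zero]
      positivity
  -- pointwise convergence
  have hshift : ∀ j : ℕ, Tendsto (fun n => a n / a (n + j)) atTop (nhds (r⁻¹ ^ j)) := by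
    intro j
    induction j with
    | zero =>
      simp only [Nat.add_zero, pow_zero]
      exact tendsto_const_nhds.congr (fun n => (div_self (ha n).ne').symm)
    | succ j ih =>
      have h2 : Tendsto (fun n => a (n + j) / a (n + j + 1)) atTop (nhds r⁻¹) := by
        have h3 : Tendsto (fun n => a n / a (n + 1)) atTop (nhds r⁻¹) := by
          have h4 := hlim.inv₀ hr0.ne'
          exact h4.congr (fun n => by rw [inv_div])
        exact h3.comp (tendsto_add_atTop_nat j)
      have h5 := ih.mul h2
      rw [← pow_succ] at h5
      refine h5.congr (fun n => ?_)
      have hA : a (n + j) ≠ 0 := (ha _).ne'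
      have hB : a (n + j + 1) ≠ 0 := (ha _).ne'
      show a n / a (n + j) * (a (n + j) / a (n + j + 1)) = a n / a (n + (j + 1))
      rw [show n + (j + 1) = n + j + 1 from rfl]
      field_simp
  have hab : ∀ j : ℕ, Tendsto (fun n => f n j) atTop (nhds (r⁻¹ ^ j)) := by
    intro j
    have h1 : Tendsto (fun n : ℕ => a (n - j) / a ((n - j) + j)) atTop (nhds (r⁻¹ ^ j)) :=
      (hshift j).comp (tendsto_sub_atTop_nat j)
    apply h1.congr'
    filter_upwards [eventually_gt_atTop j] with n hn
    rw [hf_def]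
    simp only [if_pos hn]
    rw [Nat.sub_add_cancel hn.le]
  -- dominated convergence
  have hT := tendsto_tsum_of_dominated_convergence h_sum hab h_bound
  -- compute the limit sum
  have hrinv : r⁻¹ < 1 := inv_lt_one_of_one_lt₀ hr
  have hgsum : ∑' j : ℕ, r⁻¹ ^ j = r / (r - 1) := by
    rw [tsum_geometric_of_lt_one (by positivity) hrinv]
    have h1 : (1 : ℝ) - r⁻¹ = (r - 1) / r := by
      field_simp
    rw [h1, inv_div]
  rw [hgsum] at hT
  -- identify the partial sums
  apply hT.congr
  intro n
  have hsupp : ∀ j ∉ Finset.range n, f n j = 0 := by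
    intro j hj
    rw [hf_def]
    simp only [Finset.mem_range, not_lt] at hj
    exact if_neg (not_lt.mpr hj)
  rw [tsum_eq_sum hsupp, Finset.sum_div]
  refine Finset.sum_nbij' (i := fun j => n - j) (j := fun k => n - k) ?_ ?_ ?_ ?_ ?_
  · intro j hj
    simp only [Finset.mem_range] at hj
    simp only [Finset.mem_Icc]
    omega
  · intro k hk
    simp only [Finset.mem_Icc] at hk
    simp only [Finset.mem_range]
    omega
  · intro j hj
    simp only [Finset.mem_range] at hj
    omega
  · intro k hk
    simp only [Finset.mem_Icc] at hk
    omega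
  · intro j hj
    simp only [Finset.mem_range] at hj
    rw [hf_def]
    dsimp only
    rw [if_pos hj]

/-- **Lemma (discrete Karamata, increasing case).** If `φ` is regularly varying of
index `-1`, then for every `α > β`,
`(∑_{k=1}^n 2^{kα} φ(2^k)^β) / (2^{nα} φ(2^n)^β) → 2^{α-β}/(2^{α-β}-1)`. -/
theorem discrete_karamata_sum_of_regularly_varying (φ : ℝ → ℝ)
    (hpos : ∀ t, 0 ≤ t → 0 < φ t)
    (hmeas : Measurable φ)
    (hrv : ∀ l : ℝ, 0 < l →
      Tendsto (fun t => φ (l * t) / φ t) atTop (nhds l⁻¹))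
    (α β : ℝ) (hαβ : β < α) :
    Tendsto
      (fun n : ℕ =>
        (∑ k ∈ Finset.Icc 1 n, (2 : ℝ) ^ ((k : ℝ) * α) * φ ((2 : ℝ) ^ k) ^ β) /
          ((2 : ℝ) ^ ((n : ℝ) * α) * φ ((2 : ℝ) ^ n) ^ β))
      atTop
      (nhds ((2 : ℝ) ^ (α - β) / ((2 : ℝ) ^ (α - β) - 1))) := by
  set a : ℕ → ℝ := fun k => (2 : ℝ) ^ ((k : ℝ) * α) * φ ((2 : ℝ) ^ k) ^ β with ha_def
  have hφpos : ∀ k : ℕ, 0 < φ ((2 : ℝ) ^ k) := fun k => hpos _ (by positivity)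
  have ha : ∀ k, 0 < a k := by
    intro k
    exact mul_pos (Real.rpow_pos_of_pos two_pos _) (Real.rpow_pos_of_pos (hφpos k) β)
  have hr : (1 : ℝ) < (2 : ℝ) ^ (α - β) :=
    (Real.one_lt_rpow_iff_of_pos two_pos).mpr (Or.inl ⟨one_lt_two, sub_pos.mpr hαβ⟩)
  have hratio : Tendsto (fun n => a (n + 1) / a n) atTop (nhds ((2 : ℝ) ^ (α - β))) := by
    have hphi : Tendsto (fun n : ℕ => φ (2 * (2 : ℝ) ^ n) / φ ((2 : ℝ) ^ n)) atTop
        (nhds (2⁻¹ : ℝ)) :=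
      (hrv 2 two_pos).comp (tendsto_pow_atTop_atTop_of_one_lt one_lt_two)
    have hphiβ : Tendsto (fun n : ℕ => (φ (2 * (2 : ℝ) ^ n) / φ ((2 : ℝ) ^ n)) ^ β) atTop
        (nhds ((2⁻¹ : ℝ) ^ β)) :=
      hphi.rpow_const (Or.inl (by norm_num))
    have hmul := hphiβ.const_mul ((2 : ℝ) ^ α)
    have hlimval : (2 : ℝ) ^ α * (2⁻¹ : ℝ) ^ β = (2 : ℝ) ^ (α - β) := by
      rw [Real.inv_rpow (by norm_num : (0:ℝ) ≤ 2), Real.rpow_sub two_pos]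
      rw [div_eq_mul_inv]
    rw [hlimval] at hmul
    apply hmul.congr
    intro n
    rw [ha_def]
    have h2eq : (2 : ℝ) ^ (n + 1) = 2 * (2 : ℝ) ^ n := by rw [pow_succ]; ring
    rw [mul_div_mul_comm]
    congr 1
    · rw [← Real.rpow_sub two_pos]
      congr 1
      push_cast
      ring
    · rw [h2eq, Real.div_rpow (hpos _ (by positivity)).le (hφpos n).le]
  exact aux_ratio_sum a ha _ hr hratio
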